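/- Let v > w ≥ 0, V = 2^v, W = 2^w, and m ≥ V + W. For q = 2^{V+W} - 2^W, the q-th point of the two-dimensional Sobol' sequence is x_q = (2^{-W} - 2^{-V-W}, 2^{-V} + 2^{-V-W}). -/

import Mathlib

open Finset

/-- The `i`-th binary digit of `n` (1-indexed: `n = Σ nᵢ 2^(i-1)`). -/
def bit (n i : ℕ) : ℕ := if Nat.testBit n (i-1) then 1 else 0

/-- `φ` of the digit vector of `n` truncated to `m` digits: `Σ nᵢ 2^(-i)`. -/
noncomputable def phi (m n : ℕ) : ℝ :=
  ∑ i ∈ Finset.Icc 1 m, (bit n i : ℝ) * (2:ℝ) ^ (-(i:ℤ))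

/-- The `i`-th coordinate of `P_m · (digit vector of n)` over `F₂`, where
`P_m[i][j] = C(j-1, i-1) mod 2` is the upper-triangular Pascal matrix. -/
def pbit (m n i : ℕ) : ℕ :=
  (∑ j ∈ Finset.Icc 1 m, (Nat.choose (j-1) (i-1) % 2) * bit n j) % 2

/-- `φ(P_m · n)`. -/
noncomputable def phiP (m n : ℕ) : ℝ :=
  ∑ i ∈ Finset.Icc 1 m, (pbit m n i : ℝ) * (2:ℝ) ^ (-(i:ℤ))

/-- The `n`-th point of the two-dimensional Sobol' sequence (with `n < 2^m`). -/
noncomputable def sobol (m n : ℕ) : ℝ × ℝ := (phi m n, phiP m n)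

/-- ℓ^∞ distance on ℝ². -/
noncomputable def linf (a b : ℝ × ℝ) : ℝ := max |a.1 - b.1| |a.2 - b.2|

/-- ℓ^∞ separation radius of the first `N` Sobol' points (digit length `m`). -/
noncomputable def sep (m N : ℕ) : ℝ :=
  (1/2) * sInf {d : ℝ | ∃ p q : ℕ, p < N ∧ q < N ∧ p ≠ q ∧ d = linf (sobol m p) (sobol m q)}

/-- ℓ^∞ covering radius of the first `N` Sobol' points (digit length `m`). -/
noncomputable def cov (m N : ℕ) : ℝ :=
  sSup {r : ℝ | ∃ x : ℝ × ℝ, x.1 ∈ Set.Icc (0:ℝ) 1 ∧ x.2 ∈ Set.Icc (0:ℝ) 1 ∧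
    r = sInf {d : ℝ | ∃ n : ℕ, n < N ∧ d = linf x (sobol m n)}}


lemma aux_mod2 (S b : ℕ) (hb : b < 2) (h : (S : ZMod 2) = (b : ZMod 2)) : S % 2 = b := by
  have h1 : ((S % 2 : ℕ) : ZMod 2) = (b : ZMod 2) := by rwa [ZMod.natCast_mod]
  have h2 := congrArg ZMod.val h1
  rwa [ZMod.val_cast_of_lt (Nat.mod_lt _ (by norm_num)), ZMod.val_cast_of_lt hb] at h2

lemma aux_bit (V W i : ℕ) (hi : 1 ≤ i) :
    bit (2 ^ (V + W) - 2 ^ W) i = if W + 1 ≤ i ∧ i ≤ V + W then 1 else 0 := by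
  have hq : 2 ^ (V + W) - 2 ^ W = (2 ^ V - 1) <<< W := by
    rw [Nat.shiftLeft_eq, Nat.sub_mul, one_mul, ← pow_add]
  have h2 : (W ≤ i - 1 ∧ i - 1 - W < V) ↔ (W + 1 ≤ i ∧ i ≤ V + W) := by omega
  rw [bit, hq, Nat.testBit_shiftLeft, Nat.testBit_two_pow_sub_one]
  simp only [ge_iff_le, Bool.and_eq_true, decide_eq_true_eq, h2]

lemma aux_hockey (r : ℕ) : ∀ b, ∑ k ∈ Finset.range b, Nat.choose k r = Nat.choose b (r+1)
  | 0 => by simp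
  | b+1 => by
    rw [Finset.sum_range_succ, aux_hockey r b, Nat.choose_succ_succ']
    omega

lemma aux_choose_pow (n k : ℕ) :
    ((Nat.choose (2 ^ n) k : ZMod 2)) =
      (if k = 0 then 1 else 0) + (if k = 2 ^ n then 1 else 0) := by
  have hn : (2:ℕ) ^ n ≠ 0 := pow_ne_zero n two_ne_zero
  by_cases hk0 : k = 0
  · subst hk0; simp [Ne.symm hn]
  · by_cases hk2 : k = 2 ^ n
    · subst hk2; simp [hn]
    · rw [if_neg hk0, if_neg hk2, add_zero]
      rw [ZMod.natCast_eq_zero_iff]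
      exact Nat.prime_two.dvd_choose_pow hk0 hk2

lemma aux_geom : ∀ n : ℕ, ∑ i ∈ Finset.Icc 1 n, (2:ℝ) ^ (-(i:ℤ)) = 1 - (2:ℝ) ^ (-(n:ℤ))
  | 0 => by simp
  | n+1 => by
    rw [Finset.sum_Icc_succ_top (by omega), aux_geom n]
    have e : (-(((n:ℕ)+1 : ℕ):ℤ)) = -(n:ℤ) - 1 := by push_cast; ring
    rw [e, zpow_sub₀ (two_ne_zero), zpow_one]
    ring

lemma aux_vand (v w i : ℕ) :
    ((Nat.choose (2^v + 2^w) i : ZMod 2)) =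
      ((if i = 0 then 1 else 0) + (if i = 2^w then 1 else 0))
      + ((if i = 2^v then 1 else 0) + (if i = 2^v + 2^w then 1 else 0)) := by
  rw [Nat.add_choose_eq, Nat.cast_sum]
  have step : ∀ ij : ℕ × ℕ, ((Nat.choose (2^v) ij.1 * Nat.choose (2^w) ij.2 : ℕ) : ZMod 2)
      = (((if ij = ((0:ℕ),(0:ℕ)) then 1 else 0) + (if ij = (0, 2^w) then 1 else 0))
      + ((if ij = (2^v, 0) then 1 else 0) + (if ij = (2^v, 2^w) then 1 else 0)) : ZMod 2) := by
    rintro ⟨a, b⟩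
    rw [Nat.cast_mul, aux_choose_pow, aux_choose_pow]
    have h1 : (2:ℕ)^v ≠ 0 := pow_ne_zero _ two_ne_zero
    have h2 : (2:ℕ)^w ≠ 0 := pow_ne_zero _ two_ne_zero
    simp only [Prod.mk.injEq]
    by_cases ha : a = 0 <;> by_cases ha' : a = 2^v <;>
      by_cases hb : b = 0 <;> by_cases hb' : b = 2^w <;> simp_all
  rw [Finset.sum_congr rfl fun ij _ => step ij]
  simp only [Finset.sum_add_distrib, Finset.sum_ite_eq', Finset.HasAntidiagonal.mem_antidiagonal]
  simp only [zero_add, add_zero, show ((0:ℕ) = i) ↔ (i = 0) from eq_comm,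
      show ((2:ℕ)^w = i) ↔ (i = 2^w) from eq_comm,
      show ((2:ℕ)^v = i) ↔ (i = 2^v) from eq_comm,
      show ((2:ℕ)^v+2^w = i) ↔ (i = 2^v+2^w) from eq_comm]

lemma aux_pbit (v w m i : ℕ) (hvw : w < v) (hm : 2^v + 2^w ≤ m) (hi1 : 1 ≤ i) :
    pbit m (2 ^ (2^v + 2^w) - 2 ^ (2^w)) i
      = if i = 2^v ∨ i = 2^v + 2^w then 1 else 0 := by
  have p1 : (0:ℕ) < 2^w := pow_pos (by norm_num) w
  have p2 : (2:ℕ)^w < 2^v := Nat.pow_lt_pow_right (by norm_num) hvw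
  rw [pbit]
  apply aux_mod2
  · split_ifs <;> norm_num
  push_cast [ZMod.natCast_mod]
  have hbit : ∀ j ∈ Finset.Icc 1 m,
      ((Nat.choose (j-1) (i-1) : ZMod 2)) * ((bit (2^(2^v+2^w) - 2^(2^w)) j : ℕ) : ZMod 2)
      = if j ∈ Finset.Icc (2^w+1) (2^v+2^w) then ((Nat.choose (j-1) (i-1) : ZMod 2)) else 0 := by
    intro j hj
    rw [Finset.mem_Icc] at hj
    rw [aux_bit _ _ j hj.1]
    by_cases h : 2^w + 1 ≤ j ∧ j ≤ 2^v + 2^w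
    · rw [if_pos h, if_pos (Finset.mem_Icc.mpr h)]; norm_num
    · rw [if_neg h, if_neg (fun hc => h (Finset.mem_Icc.mp hc))]; norm_num
  rw [Finset.sum_congr rfl hbit, Finset.sum_ite_mem,
      Finset.inter_eq_right.mpr (Finset.Icc_subset_Icc (by omega) (by omega))]
  have hre : ∑ j ∈ Finset.Icc (2^w+1) (2^v+2^w), ((Nat.choose (j-1) (i-1) : ZMod 2))
      = ((∑ k ∈ Finset.Ico (2^w) (2^v+2^w), Nat.choose k (i-1) : ℕ) : ZMod 2) := by
    rw [Nat.cast_sum, ← Finset.Ico_add_one_right_eq_Icc, Finset.sum_Ico_eq_sum_range,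
        Finset.sum_Ico_eq_sum_range]
    apply Finset.sum_congr
    · congr 1
      omega
    · intro k _
      congr 2
      omega
  rw [hre]
  have hsum : ∑ k ∈ Finset.Ico (2^w) (2^v+2^w), Nat.choose k (i-1)
      = Nat.choose (2^v+2^w) i - Nat.choose (2^w) i := by
    have h1 := Finset.sum_range_add_sum_Ico (fun k => Nat.choose k (i-1))
      (show 2^w ≤ 2^v+2^w by omega)
    have h2 := aux_hockey (i-1) (2^v+2^w)
    have h3 := aux_hockey (i-1) (2^w)
    have hi' : i - 1 + 1 = i := by omega
    rw [hi'] at h2 h3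
    simp only [h2, h3] at h1
    omega
  rw [hsum, Nat.cast_sub (Nat.choose_le_choose i (by omega)), aux_vand, aux_choose_pow]
  by_cases hA : i = 2^v
  · simp [hA, (by omega : ¬ (2:ℕ)^v = 2^v + 2^w), (by omega : (2:ℕ)^v ≠ 0),
      (by omega : ¬ (2:ℕ)^v = 2^w)]
  by_cases hB : i = 2^v + 2^w
  · simp [hB, (by omega : ¬ (2:ℕ)^v + 2^w = 2^v), (by omega : (2:ℕ)^v + 2^w ≠ 0),
      (by omega : ¬ (2:ℕ)^v + 2^w = 2^w)]
  · simp only [if_neg hA, if_neg hB, if_neg (by tauto : ¬ (i = 2^v ∨ i = 2^v + 2^w))]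
    ring

theorem stmt_13 (v w m : ℕ) (hvw : w < v) (hm : 2 ^ v + 2 ^ w ≤ m) :
    sobol m (2 ^ (2 ^ v + 2 ^ w) - 2 ^ (2 ^ w)) =
      ((2:ℝ) ^ (-(2 ^ w : ℤ)) - (2:ℝ) ^ (-(2 ^ v : ℤ) - (2 ^ w : ℤ)),
       (2:ℝ) ^ (-(2 ^ v : ℤ)) + (2:ℝ) ^ (-(2 ^ v : ℤ) - (2 ^ w : ℤ))) := by
  have p1 : (0:ℕ) < 2^w := pow_pos (by norm_num) w
  have p2 : (2:ℕ)^w < 2^v := Nat.pow_lt_pow_right (by norm_num) hvw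
  unfold sobol
  rw [Prod.mk.injEq]
  constructor
  · unfold phi
    have hb : ∀ i ∈ Finset.Icc 1 m, ((bit (2^(2^v+2^w) - 2^(2^w)) i : ℝ)) * (2:ℝ)^(-(i:ℤ))
        = if i ∈ Finset.Icc (2^w+1) (2^v+2^w) then (2:ℝ)^(-(i:ℤ)) else 0 := by
      intro i hi
      rw [Finset.mem_Icc] at hi
      rw [aux_bit _ _ i hi.1]
      by_cases h : 2^w+1 ≤ i ∧ i ≤ 2^v+2^w
      · rw [if_pos h, if_pos (Finset.mem_Icc.mpr h)]; norm_num
      · rw [if_neg h, if_neg (fun hc => h (Finset.mem_Icc.mp hc))]; norm_num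
    rw [Finset.sum_congr rfl hb, Finset.sum_ite_mem,
        Finset.inter_eq_right.mpr (Finset.Icc_subset_Icc (by omega) (by omega))]
    have split : ∑ i ∈ Finset.Icc (1:ℕ) (2^w), (2:ℝ)^(-(i:ℤ))
          + ∑ i ∈ Finset.Icc (2^w+1 : ℕ) (2^v+2^w), (2:ℝ)^(-(i:ℤ))
        = ∑ i ∈ Finset.Icc (1:ℕ) (2^v+2^w), (2:ℝ)^(-(i:ℤ)) := by
      rw [← Finset.Ico_add_one_right_eq_Icc, ← Finset.Ico_add_one_right_eq_Icc, ← Finset.Ico_add_one_right_eq_Icc]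
      exact Finset.sum_Ico_consecutive _ (by omega) (by omega)
    rw [aux_geom, aux_geom] at split
    have e1 : (-(((2^w : ℕ)):ℤ)) = -((2:ℤ)^w) := by push_cast; ring
    have e2 : (-(((2^v+2^w : ℕ)):ℤ)) = -((2:ℤ)^v) - (2:ℤ)^w := by push_cast; ring
    rw [e1, e2] at split
    linarith [split]
  · unfold phiP
    have hb : ∀ i ∈ Finset.Icc 1 m, ((pbit m (2^(2^v+2^w) - 2^(2^w)) i : ℝ)) * (2:ℝ)^(-(i:ℤ))
        = if i ∈ ({2^v, 2^v+2^w} : Finset ℕ) then (2:ℝ)^(-(i:ℤ)) else 0 := by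
      intro i hi
      rw [Finset.mem_Icc] at hi
      rw [aux_pbit v w m i hvw hm hi.1]
      by_cases h : i = 2^v ∨ i = 2^v + 2^w
      · rw [if_pos h, if_pos (by simp [Finset.mem_insert, Finset.mem_singleton, h])]
        norm_num
      · rw [if_neg h, if_neg (by simp only [Finset.mem_insert, Finset.mem_singleton]; exact h)]
        norm_num
    rw [Finset.sum_congr rfl hb, Finset.sum_ite_mem,
        Finset.inter_eq_right.mpr (by
          intro x hx
          simp only [Finset.mem_insert, Finset.mem_singleton] at hx
          rw [Finset.mem_Icc]
          rcases hx with rfl | rfl <;> omega)]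
    rw [Finset.sum_pair (by omega : (2:ℕ)^v ≠ 2^v + 2^w)]
    have e1 : (-(((2^v : ℕ)):ℤ)) = -((2:ℤ)^v) := by push_cast; ring
    have e2 : (-(((2^v+2^w : ℕ)):ℤ)) = -((2:ℤ)^v) - (2:ℤ)^w := by push_cast; ring
    rw [e1, e2]
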